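/- For z_α = α(k+k₃) + q with ⟨q, k+k₃⟩ = 0 and |q| = r_α, where α ↦ z_α satisfies C(z_α) = 0 for all α in an open interval (with C as in the context), differentiating yields ∂_α |z_α|² = 2|k+k₃|² · (Ω'(|k+k₃-z_α|)/|k+k₃-z_α|) / (Ω'(|k+k₃-z_α|)/|k+k₃-z_α| + Ω'(|z_α|)/|z_α|). -/

import Mathlib

open RealInnerProductSpace

/-- differentiating `C(z_α) = 0` along the resonant manifold yields the
formula for `∂_α |z_α|²`. -/
theorem stmt_2
    (Ω Ω' : ℝ → ℝ) (C₂ C₃ : ℝ) (hC₂ : 0 < C₂)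
    (hΩ : ∀ x : ℝ, HasDerivAt Ω (Ω' x) x)
    (hlb : ∀ x : ℝ, 0 < x → C₂ ≤ Ω' x / x)
    (hub : ∀ x : ℝ, 0 < x → Ω' x / x ≤ C₃)
    (k k₃ : EuclideanSpace ℝ (Fin 3)) (hkk₃ : k + k₃ ≠ 0)
    (Cfun : EuclideanSpace ℝ (Fin 3) → ℝ)
    (hCfun : ∀ z, Cfun z = Ω ‖k + k₃ - z‖ - Ω ‖k‖ - Ω ‖k₃‖ + Ω ‖z‖)
    (hgrad : ∀ z, z ≠ 0 → z ≠ k + k₃ →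
      HasGradientAt Cfun
        ((Ω' ‖k + k₃ - z‖ / ‖z - (k + k₃)‖) • (z - (k + k₃))
          + (Ω' ‖z‖ / ‖z‖) • z) z)
    (I : Set ℝ) (hI : IsOpen I)
    (z : ℝ → EuclideanSpace ℝ (Fin 3)) (z' : ℝ → EuclideanSpace ℝ (Fin 3))
    (hzdiff : ∀ a ∈ I, HasDerivAt z (z' a) a)
    (hres : ∀ a ∈ I, Cfun (z a) = 0)
    (hdecomp : ∀ a ∈ I, ⟪z a - a • (k + k₃), k + k₃⟫ = 0)
    (hz0 : ∀ a ∈ I, z a ≠ 0) (hzk : ∀ a ∈ I, z a ≠ k + k₃)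
    (α : ℝ) (hα : α ∈ I) :
    HasDerivAt (fun a => ‖z a‖ ^ 2)
      (2 * ‖k + k₃‖ ^ 2 *
        ((Ω' ‖k + k₃ - z α‖ / ‖k + k₃ - z α‖) /
          (Ω' ‖k + k₃ - z α‖ / ‖k + k₃ - z α‖ + Ω' ‖z α‖ / ‖z α‖))) α := by
  set s : EuclideanSpace ℝ (Fin 3) := k + k₃ with hs
  have hz := hzdiff α hα
  have hnz : (0:ℝ) < ‖z α‖ := norm_pos_iff.mpr (hz0 α hα)
  have hnsz : (0:ℝ) < ‖s - z α‖ := by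
    rw [norm_sub_pos_iff]
    exact fun h => (hzk α hα) h.symm
  set A : ℝ := Ω' ‖s - z α‖ / ‖s - z α‖ with hA
  set B : ℝ := Ω' ‖z α‖ / ‖z α‖ with hB
  have hApos : 0 < A := lt_of_lt_of_le hC₂ (hlb _ hnsz)
  have hBpos : 0 < B := lt_of_lt_of_le hC₂ (hlb _ hnz)
  have hABne : A + B ≠ 0 := by positivity
  -- derivative of ⟪z a, s⟫ is ‖s‖²
  have hinner : HasDerivAt (fun a => ⟪z a, s⟫) (⟪z α, (0:EuclideanSpace ℝ (Fin 3))⟫ + ⟪z' α, s⟫) α :=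
    HasDerivAt.inner ℝ hz (hasDerivAt_const α s)
  have hdecomp' : (fun a => ⟪z a, s⟫) =ᶠ[nhds α] fun a => a * ‖s‖ ^ 2 := by
    filter_upwards [hI.mem_nhds hα] with a ha
    have := hdecomp a ha
    rw [inner_sub_left, sub_eq_zero] at this
    rw [this, real_inner_smul_left, real_inner_self_eq_norm_sq]
  have hlin : HasDerivAt (fun a => ⟪z a, s⟫) (‖s‖ ^ 2) α := by
    simpa using ((hasDerivAt_id α).mul_const (‖s‖ ^ 2)).congr_of_eventuallyEq hdecomp'
  have hzs : ⟪z' α, s⟫ = ‖s‖ ^ 2 := by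
    have := hinner.unique hlin
    simpa using this
  -- derivative of Cfun ∘ z is 0
  have hG := (hgrad (z α) (hz0 α hα) (hzk α hα)).hasFDerivAt
  have hCz : HasDerivAt (fun a => Cfun (z a))
      ⟪(Ω' ‖s - z α‖ / ‖z α - s‖) • (z α - s) + B • z α, z' α⟫ α := by
    have := hG.comp_hasDerivAt α hz
    simp only [InnerProductSpace.toDual_apply_apply] at this; exact this
  have hCz0 : HasDerivAt (fun a => Cfun (z a)) 0 α := by
    refine (hasDerivAt_const α (0:ℝ)).congr_of_eventuallyEq ?_
    filter_upwards [hI.mem_nhds hα] with a ha using hres a ha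
  have hkey : ⟪(Ω' ‖s - z α‖ / ‖z α - s‖) • (z α - s) + B • z α, z' α⟫ = 0 :=
    hCz.unique hCz0
  rw [inner_add_left, real_inner_smul_left, real_inner_smul_left, inner_sub_left,
    norm_sub_rev (z α) s, ← hA] at hkey
  have hszs : ⟪s, z' α⟫ = ‖s‖ ^ 2 := by rw [real_inner_comm]; exact hzs
  rw [hszs] at hkey
  -- so (A+B) * ⟪z α, z' α⟫ = A * ‖s‖²
  set X : ℝ := ⟪z α, z' α⟫ with hX
  have hXeq : (A + B) * X = A * ‖s‖ ^ 2 := by ring_nf; ring_nf at hkey; linarith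
  -- derivative of ‖z a‖²
  have hnormsq : HasDerivAt (fun a => ‖z a‖ ^ 2) (⟪z α, z' α⟫ + ⟪z' α, z α⟫) α := by
    have := HasDerivAt.inner ℝ hz hz
    refine this.congr_of_eventuallyEq ?_
    filter_upwards with a
    rw [real_inner_self_eq_norm_sq]
  have hval : ⟪z α, z' α⟫ + ⟪z' α, z α⟫ = 2 * ‖s‖ ^ 2 * (A / (A + B)) := by
    have hc : ⟪z' α, z α⟫ = X := by rw [hX]; exact real_inner_comm _ _
    rw [hc, ← hX]
    field_simp
    linarith [hXeq]
  rw [hval] at hnormsq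
  exact hnormsq
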